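/- For every δ > 0 and every finite sequence of points a_1, …, a_m ∈ R^n there exists p_0 = p_0(a_1,…,a_m, δ) such that for every prime p ≥ p_0 there exist N ≥ n and points s_1, …, s_m ∈ R^N such that the set {s_1, …, s_m} is Euclidean sub-p-toral and ‖ι(a_i) − s_i‖ < δ for every i, where ι : R^n → R^N is the standard inclusion (padding with zero coordinates). -/

import Mathlib

set_option maxHeartbeats 1000000

open Real


/-- A finite set `X ⊆ ℝ^k` is *Euclidean sub-p-toral* if some isometric copy of `X`
in a possibly larger `ℝ^n` is contained in an orbit of a finite group of isometries
of `ℝ^n` isomorphic to `(ℤ/p)^α`. -/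
def EuclideanSubPToral (p : ℕ) {k : ℕ} (X : Set (EuclideanSpace ℝ (Fin k))) : Prop :=
  ∃ n : ℕ, k ≤ n ∧
    ∃ ι : X → EuclideanSpace ℝ (Fin n),
      (∀ x y : X, dist (ι x) (ι y) = dist (x : EuclideanSpace ℝ (Fin k)) y) ∧
      ∃ (G : Subgroup (EuclideanSpace ℝ (Fin n) ≃ᵢ EuclideanSpace ℝ (Fin n))) (α : ℕ),
        Nonempty (G ≃* Multiplicative (Fin α → ZMod p)) ∧
        ∃ v : EuclideanSpace ℝ (Fin n), ∀ x : X, ∃ g ∈ G,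
          (g : EuclideanSpace ℝ (Fin n) ≃ᵢ EuclideanSpace ℝ (Fin n)) v = ι x

/-- The standard inclusion `ℝ^n → ℝ^N`, padding with zero coordinates. -/
noncomputable def padInclusion (n N : ℕ) (x : EuclideanSpace ℝ (Fin n)) :
    EuclideanSpace ℝ (Fin N) :=
  (WithLp.equiv 2 (Fin N → ℝ)).symm
    (fun j => if h : (j : ℕ) < n then (WithLp.equiv 2 (Fin n → ℝ)) x ⟨j, h⟩ else 0)

noncomputable section

namespace SubPToralProof

abbrev CSp (n : ℕ) := PiLp 2 (fun _ : Fin n => ℂ)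

def cEquiv (n : ℕ) : CSp n ≃ₗᵢ[ℝ] EuclideanSpace ℝ (Fin (n + n)) where
  toLinearEquiv :=
    { toFun := fun z => (WithLp.toLp 2 fun j : Fin (n + n) =>
        if h : (j : ℕ) < n then (z ⟨j, h⟩).re
        else (z ⟨(j : ℕ) - n, by have := j.isLt; omega⟩).im :
          EuclideanSpace ℝ (Fin (n + n)))
      invFun := fun w => (WithLp.toLp 2 fun j : Fin n =>
        Complex.mk (w ⟨j, by have := j.isLt; omega⟩) (w ⟨n + (j : ℕ), by have := j.isLt; omega⟩) :
          CSp n)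
      map_add' := by
        intro z z'
        ext j
        by_cases h : (j : ℕ) < n <;> simp [h, PiLp.add_apply]
      map_smul' := by
        intro r z
        ext j
        by_cases h : (j : ℕ) < n <;> simp [h, PiLp.smul_apply, Complex.smul_re, Complex.smul_im]
      left_inv := by
        intro z
        ext j
        have h1 : ((⟨(j : ℕ), by have := j.isLt; omega⟩ : Fin (n + n)) : ℕ) < n := j.isLt
        have h2 : ¬ ((⟨n + (j : ℕ), by have := j.isLt; omega⟩ : Fin (n + n)) : ℕ) < n := by simp
        apply Complex.ext
        · simp only [dif_pos h1]
        · simp only [dif_neg h2]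
          exact congrArg (fun t => (z t).im) (Fin.ext (by simp))
      right_inv := by
        intro w
        ext j
        by_cases h : (j : ℕ) < n
        · simp only [dif_pos h]
        · simp only [dif_neg h]
          exact congrArg (fun t => w t) (Fin.ext (by show n + ((j : ℕ) - n) = (j : ℕ); omega)) }
  norm_map' := by
    intro z
    have key : (∑ j : Fin (n + n), ‖(if h : (j : ℕ) < n then (z ⟨j, h⟩).re
        else (z ⟨(j : ℕ) - n, by have := j.isLt; omega⟩).im)‖ ^ 2)
        = ∑ i : Fin n, ‖z i‖ ^ 2 := by
      rw [Fin.sum_univ_add]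
      have e1 : ∀ i : Fin n, ‖(if h : ((Fin.castAdd n i : Fin (n + n)) : ℕ) < n
          then (z ⟨(Fin.castAdd n i : Fin (n+n)), h⟩).re
          else (z ⟨((Fin.castAdd n i : Fin (n+n)) : ℕ) - n, by
            have := (Fin.castAdd n i).isLt; omega⟩).im)‖ ^ 2 = ((z i).re) ^ 2 := by
        intro i
        rw [dif_pos (by simpa using i.isLt)]
        simp [sq_abs]
      have e2 : ∀ i : Fin n, ‖(if h : ((Fin.natAdd n i : Fin (n + n)) : ℕ) < n
          then (z ⟨(Fin.natAdd n i : Fin (n+n)), h⟩).re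
          else (z ⟨((Fin.natAdd n i : Fin (n+n)) : ℕ) - n, by
            have := (Fin.natAdd n i).isLt; omega⟩).im)‖ ^ 2 = ((z i).im) ^ 2 := by
        intro i
        rw [dif_neg (by simp)]
        have : ((Fin.natAdd n i : Fin (n+n)) : ℕ) - n = (i : ℕ) := by simp
        simp only [Real.norm_eq_abs, sq_abs]
        exact congrArg (fun t => (z t).im ^ 2) (Fin.ext (by simpa using this))
      simp only [e1, e2]
      rw [← Finset.sum_add_distrib]
      refine Finset.sum_congr rfl fun i _ => ?_
      simp [Complex.sq_norm, Complex.normSq_apply]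
      ring
    rw [← Real.sqrt_sq (norm_nonneg _), ← Real.sqrt_sq (norm_nonneg z),
      PiLp.norm_sq_eq_of_L2, PiLp.norm_sq_eq_of_L2]
    congr 1

variable {n : ℕ}

def onev (n : ℕ) : CSp n := WithLp.toLp 2 fun _ => (1 : ℂ)

/-- the center of rotations: `R·i` in each complex coordinate. -/
def ctr (n : ℕ) (R : ℝ) : CSp n := WithLp.toLp 2 fun _ => (R : ℂ) * Complex.I

/-- coordinatewise rotation. -/
def rotIso (c : Fin n → Circle) : CSp n ≃ₗᵢ[ℝ] CSp n :=
  LinearIsometryEquiv.piLpCongrRight 2 (fun j => rotation (c j))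

/-- rotation about the center `ctr n R`, as an isometry of `ℂⁿ`. -/
def moveIso (R : ℝ) (c : Fin n → Circle) : CSp n ≃ᵢ CSp n :=
  ((IsometryEquiv.addLeft (-(ctr n R))).trans (rotIso c).toIsometryEquiv).trans
    (IsometryEquiv.addLeft (ctr n R))

lemma moveIso_apply (R : ℝ) (c : Fin n → Circle) (z : CSp n) (j : Fin n) :
    moveIso R c z j = (R : ℂ) * Complex.I + (c j : ℂ) * (z j - (R : ℂ) * Complex.I) := by
  simp only [moveIso, IsometryEquiv.trans_apply, IsometryEquiv.addLeft_apply,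
    LinearIsometryEquiv.coe_toIsometryEquiv, rotIso, LinearIsometryEquiv.piLpCongrRight_apply,
    PiLp.toLp_apply, PiLp.add_apply, PiLp.neg_apply, rotation_apply, ctr]
  ring

/-- the isometry of `ℝ^{n+n}` obtained by conjugating with `cEquiv`. -/
def bigIso (R : ℝ) (c : Fin n → Circle) :
    EuclideanSpace ℝ (Fin (n + n)) ≃ᵢ EuclideanSpace ℝ (Fin (n + n)) :=
  ((cEquiv n).symm.toIsometryEquiv.trans (moveIso R c)).trans (cEquiv n).toIsometryEquiv

lemma bigIso_apply (R : ℝ) (c : Fin n → Circle) (x : EuclideanSpace ℝ (Fin (n + n))) :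
    bigIso R c x = cEquiv n (moveIso R c ((cEquiv n).symm x)) := rfl

/-- the circle elements attached to `k : Fin n → ZMod p`. -/
def circOf (p : ℕ) (k : Fin n → ZMod p) : Fin n → Circle :=
  fun j => Circle.exp (2 * π * ((k j).val : ℝ) / p)

lemma circOf_add {p : ℕ} [NeZero p] (k k' : Fin n → ZMod p) :
    circOf p (k + k') = circOf p k * circOf p k' := by
  funext j
  have hp : (p : ℝ) ≠ 0 := Nat.cast_ne_zero.mpr (NeZero.ne p)
  simp only [circOf, Pi.add_apply, Pi.mul_apply, ← Circle.exp_add]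
  set A := (k j).val
  set B := (k' j).val
  rw [ZMod.val_add]
  apply Circle.exp_eq_exp.mpr
  set q := (A + B) / p with hq
  refine ⟨-(q : ℤ), ?_⟩
  have hmod : (((A + B) % p : ℕ) : ℝ) = (A : ℝ) + (B : ℝ) - (p : ℝ) * (q : ℝ) := by
    have h0 : (A + B) % p + p * q = A + B := Nat.mod_add_div (A + B) p
    have h1 := congrArg (fun t : ℕ => (t : ℝ)) h0
    push_cast at h1
    linarith
  push_cast
  rw [hmod]
  field_simp
  ring

lemma exp_val_intCast {p : ℕ} [NeZero p] (r : ℤ) :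
    Circle.exp (2 * π * (((r : ZMod p)).val : ℝ) / p) = Circle.exp (2 * π * (r : ℝ) / p) := by
  have hp : (p : ℝ) ≠ 0 := Nat.cast_ne_zero.mpr (NeZero.ne p)
  apply Circle.exp_eq_exp.mpr
  refine ⟨-(r / p), ?_⟩
  have hv : (((r : ZMod p)).val : ℤ) = r % p := ZMod.val_intCast r
  have hv' : (((r : ZMod p)).val : ℝ) = (r : ℝ) - (p : ℝ) * ((r / p : ℤ) : ℝ) := by
    have := Int.emod_def r p
    have : ((((r : ZMod p)).val : ℤ) : ℝ) = ((r - p * (r / p) : ℤ) : ℝ) := by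
      rw [hv, Int.emod_def]
    push_cast at this
    exact_mod_cast this
  rw [hv']
  push_cast
  field_simp
  ring

lemma moveIso_comp {p : ℕ} [NeZero p] (R : ℝ) (k k' : Fin n → ZMod p) (z : CSp n) :
    moveIso R (circOf p (k + k')) z = moveIso R (circOf p k) (moveIso R (circOf p k') z) := by
  ext j
  rw [moveIso_apply, moveIso_apply, moveIso_apply, circOf_add]
  simp only [Pi.mul_apply, Circle.coe_mul]
  ring

/-- the homomorphism from `(ℤ/p)ⁿ` into the isometry group of `ℝ^{n+n}`. -/
def bigHom (n p : ℕ) [NeZero p] (R : ℝ) :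
    Multiplicative (Fin n → ZMod p) →*
      (EuclideanSpace ℝ (Fin (n + n)) ≃ᵢ EuclideanSpace ℝ (Fin (n + n))) :=
  MonoidHom.mk' (fun k => bigIso R (circOf p k.toAdd)) (by
    intro k k'
    apply IsometryEquiv.ext
    intro x
    rw [IsometryEquiv.mul_apply]
    rw [bigIso_apply, bigIso_apply, bigIso_apply]
    rw [LinearIsometryEquiv.symm_apply_apply]
    exact congrArg (cEquiv n) (moveIso_comp R _ _ _))

lemma bigHom_injective (n p : ℕ) [NeZero p] (R : ℝ) :
    Function.Injective (bigHom n p R) := by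
  intro k k' h
  have hp : (0 : ℝ) < (p : ℝ) := by
    have := Nat.pos_of_ne_zero (NeZero.ne p)
    exact_mod_cast this
  have hcirc : ∀ j : Fin n, circOf p k.toAdd j = circOf p k'.toAdd j := by
    intro j
    have hx := congrArg
      (fun g : EuclideanSpace ℝ (Fin (n + n)) ≃ᵢ EuclideanSpace ℝ (Fin (n + n)) =>
        g (cEquiv n (ctr n R + onev n))) h
    simp only [bigHom, MonoidHom.mk'_apply, bigIso_apply,
      LinearIsometryEquiv.symm_apply_apply] at hx
    have hx2 := congrArg (fun z : CSp n => z j) ((cEquiv n).injective hx)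
    beta_reduce at hx2
    rw [moveIso_apply, moveIso_apply] at hx2
    have h1 : ((ctr n R + onev n : CSp n) j) = (R : ℂ) * Complex.I + 1 := rfl
    rw [h1] at hx2
    apply Circle.coe_injective
    have := hx2
    field_simp at this
    simpa using this
  have hval : ∀ j : Fin n, (k.toAdd j).val = (k'.toAdd j).val := by
    intro j
    have hc := hcirc j
    simp only [circOf] at hc
    obtain ⟨mm, hmm⟩ := Circle.exp_eq_exp.mp hc
    set A := (k.toAdd j).val with hA
    set B := (k'.toAdd j).val with hB
    have hABZ : (A : ℤ) = (B : ℤ) + mm * p := by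
      have hp' : (p : ℝ) ≠ 0 := ne_of_gt hp
      have h2 : 2 * π * (A : ℝ) = 2 * π * ((B : ℝ) + (mm : ℝ) * p) := by
        field_simp at hmm
        rw [hmm]; ring
      have h3 := mul_left_cancel₀ (by positivity : (2 * π : ℝ) ≠ 0) h2
      exact_mod_cast h3
    have hAp : A < p := ZMod.val_lt _
    have hBp : B < p := ZMod.val_lt _
    have hm0 : mm = 0 := by
      rcases lt_trichotomy mm 0 with hm | hm | hm
      · exfalso
        have : mm ≤ -1 := by omega
        nlinarith [hABZ, (by exact_mod_cast hAp : (A:ℤ) < p), (by exact_mod_cast hBp : (B:ℤ) < p),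
          (by positivity : (0:ℤ) ≤ (A:ℤ)), (by positivity : (0:ℤ) ≤ (B:ℤ)),
          (by exact_mod_cast Nat.pos_of_ne_zero (NeZero.ne p) : (0:ℤ) < p)]
      · exact hm
      · exfalso
        have : 1 ≤ mm := by omega
        nlinarith [hABZ, (by exact_mod_cast hAp : (A:ℤ) < p), (by exact_mod_cast hBp : (B:ℤ) < p),
          (by positivity : (0:ℤ) ≤ (A:ℤ)), (by positivity : (0:ℤ) ≤ (B:ℤ)),
          (by exact_mod_cast Nat.pos_of_ne_zero (NeZero.ne p) : (0:ℤ) < p)]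
    rw [hm0, zero_mul, add_zero] at hABZ
    exact_mod_cast hABZ
  have : k.toAdd = k'.toAdd := funext fun j => ZMod.val_injective p (hval j)
  exact Multiplicative.toAdd.injective this

lemma chord_le (x y : ℝ) : ‖(Circle.exp x : ℂ) - (Circle.exp y : ℂ)‖ ≤ |x - y| := by
  have h1 : (Circle.exp x : ℂ) - Circle.exp y
      = (Circle.exp y : ℂ) * ((Circle.exp (x - y) : ℂ) - 1) := by
    rw [mul_sub, mul_one]
    congr 1
    · rw [← Circle.coe_mul, ← Circle.exp_add]
      ring_nf
  rw [h1, norm_mul]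
  have h2 : ‖(Circle.exp y : ℂ)‖ = 1 := by
    simpa using Circle.abs_coe (Circle.exp y)
  rw [h2, one_mul]
  set t := x - y with ht
  clear_value t
  have h3 : (Circle.exp t : ℂ) - 1 = (Real.cos t - 1 : ℝ) + (Real.sin t : ℝ) * Complex.I := by
    rw [Circle.coe_exp, Complex.exp_mul_I]
    push_cast
    ring
  have h4 : ‖(Circle.exp t : ℂ) - 1‖ ^ 2 = 2 - 2 * Real.cos t := by
    rw [h3, Complex.norm_add_mul_I, Real.sq_sqrt (by positivity)]
    nlinarith [Real.sin_sq_add_cos_sq t]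
  have h5 : ‖(Circle.exp t : ℂ) - 1‖ ^ 2 ≤ |t| ^ 2 := by
    rw [h4, sq_abs]
    have := Real.one_sub_sq_div_two_le_cos (x := t)
    linarith
  calc ‖(Circle.exp t : ℂ) - 1‖ = √(‖(Circle.exp t : ℂ) - 1‖ ^ 2) :=
        (Real.sqrt_sq (norm_nonneg _)).symm
    _ ≤ √(|t| ^ 2) := Real.sqrt_le_sqrt h5
    _ = |t| := Real.sqrt_sq (abs_nonneg _)

/-- key per-coordinate approximation bound. -/
lemma coord_bound (R pr aj : ℝ) (hR : 0 < R) (hpr : 0 < pr) (haj : |aj| ≤ R) :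
    ‖(aj : ℂ) - ((R : ℂ) * Complex.I
        + (Circle.exp (2 * π * ((round (pr * arcsin (aj / R) / (2 * π)) : ℤ) : ℝ) / pr) : ℂ)
          * ((0 : ℂ) - (R : ℂ) * Complex.I))‖
      ≤ aj ^ 2 / R + π * R / pr := by
  have hR0 : R ≠ 0 := ne_of_gt hR
  set θs := arcsin (aj / R) with hθs
  set r : ℤ := round (pr * θs / (2 * π)) with hr
  set θ := 2 * π * (r : ℝ) / pr with hθ
  have habs : |aj / R| ≤ 1 := by
    rw [abs_div, abs_of_pos hR, div_le_one hR]
    exact haj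
  have hsin : Real.sin θs = aj / R :=
    Real.sin_arcsin (abs_le.mp habs).1 (abs_le.mp habs).2
  have hcos : Real.cos θs = √(1 - (aj / R) ^ 2) := Real.cos_arcsin _
  set M : ℂ := (R : ℂ) * Complex.I * (1 - (Circle.exp θs : ℂ)) with hM
  set T : ℂ := (R : ℂ) * Complex.I + (Circle.exp θ : ℂ) * ((0 : ℂ) - (R : ℂ) * Complex.I) with hT
  have step1 : ‖(aj : ℂ) - M‖ ≤ aj ^ 2 / R := by
    have hthis : Complex.sin (θs : ℂ) * (R : ℂ) = (aj : ℂ) := by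
      rw [← Complex.ofReal_sin, hsin]
      push_cast
      rw [div_mul_cancel₀]
      exact_mod_cast hR0
    have hAM : (aj : ℂ) - M = -((R * (1 - Real.cos θs) : ℝ) : ℂ) * Complex.I := by
      rw [hM, Circle.coe_exp, Complex.exp_mul_I]
      push_cast
      linear_combination (-1 : ℂ) * hthis + (R : ℂ) * Complex.sin (θs : ℂ) * Complex.I_sq
    rw [hAM, norm_mul]
    simp only [Complex.norm_I, mul_one, norm_neg, Complex.norm_real, Real.norm_eq_abs]
    have h9 : R * √(1 - (aj / R) ^ 2) = √(R ^ 2 - aj ^ 2) := by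
      have heq : R ^ 2 - aj ^ 2 = R ^ 2 * (1 - (aj / R) ^ 2) := by
        field_simp
      rw [heq, Real.sqrt_mul (sq_nonneg R), Real.sqrt_sq hR.le]
    have hcosval : R * (1 - Real.cos θs) = R - √(R ^ 2 - aj ^ 2) := by
      rw [hcos, mul_sub, mul_one, h9]
    rw [hcosval]
    have hnn : (0:ℝ) ≤ R ^ 2 - aj ^ 2 := by nlinarith [abs_le.mp haj]
    have hs := Real.sq_sqrt hnn
    have hsn := Real.sqrt_nonneg (R ^ 2 - aj ^ 2)
    have hle : √(R ^ 2 - aj ^ 2) ≤ R := by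
      calc √(R ^ 2 - aj ^ 2) ≤ √(R ^ 2) := Real.sqrt_le_sqrt (by nlinarith)
        _ = R := Real.sqrt_sq hR.le
    rw [abs_of_nonneg (by linarith), le_div_iff₀ hR]
    nlinarith [hs, hsn, hle]
  have step2 : ‖M - T‖ ≤ π * R / pr := by
    have hMT : M - T = (R : ℂ) * Complex.I * ((Circle.exp θ : ℂ) - (Circle.exp θs : ℂ)) := by
      rw [hM, hT]
      ring
    have hRI : ‖(R : ℂ) * Complex.I‖ = R := by
      simp [abs_of_pos hR]
    rw [hMT, norm_mul, hRI]
    have hround : |θ - θs| ≤ π / pr := by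
      have h0 := abs_sub_round (pr * θs / (2 * π))
      have hθval : θ - θs = (2 * π / pr) * ((r : ℝ) - pr * θs / (2 * π)) := by
        rw [hθ]
        field_simp
      rw [hθval, abs_mul, abs_of_pos (by positivity : (0:ℝ) < 2 * π / pr)]
      have h1 : |(r : ℝ) - pr * θs / (2 * π)| ≤ 1 / 2 := by
        rw [abs_sub_comm]
        exact h0
      calc (2 * π / pr) * |(r : ℝ) - pr * θs / (2 * π)| ≤ (2 * π / pr) * (1 / 2) := by
            exact mul_le_mul_of_nonneg_left h1 (by positivity)
        _ = π / pr := by ring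
    calc R * ‖(Circle.exp θ : ℂ) - (Circle.exp θs : ℂ)‖ ≤ R * |θ - θs| :=
          mul_le_mul_of_nonneg_left (chord_le θ θs) hR.le
      _ ≤ R * (π / pr) := mul_le_mul_of_nonneg_left hround hR.le
      _ = π * R / pr := by ring
  calc ‖(aj : ℂ) - T‖ = ‖((aj : ℂ) - M) + (M - T)‖ := by ring_nf
    _ ≤ ‖(aj : ℂ) - M‖ + ‖M - T‖ := norm_add_le _ _
    _ ≤ aj ^ 2 / R + π * R / pr := add_le_add step1 step2

lemma cEquiv_apply_lt (z : CSp n) (j : Fin (n + n)) (h : (j : ℕ) < n) :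
    cEquiv n z j = (z ⟨j, h⟩).re := by simp [cEquiv, h]

lemma cEquiv_apply_ge (z : CSp n) (j : Fin (n + n)) (h : ¬ (j : ℕ) < n) :
    cEquiv n z j = (z ⟨(j : ℕ) - n, by have := j.isLt; omega⟩).im := by simp [cEquiv, h]

lemma coord_le_norm (x : EuclideanSpace ℝ (Fin n)) (j : Fin n) : |x j| ≤ ‖x‖ := by
  have h1 : ‖x‖ ^ 2 = ∑ i, ‖x i‖ ^ 2 := PiLp.norm_sq_eq_of_L2 _ x
  have h2 : ‖x j‖ ^ 2 ≤ ∑ i, ‖x i‖ ^ 2 :=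
    Finset.single_le_sum (f := fun i => ‖x i‖ ^ 2) (fun i _ => sq_nonneg _) (Finset.mem_univ j)
  have h3 : |x j| ^ 2 ≤ ‖x‖ ^ 2 := by
    rw [h1]
    simpa [Real.norm_eq_abs] using h2
  calc |x j| = √(|x j| ^ 2) := (Real.sqrt_sq (abs_nonneg _)).symm
    _ ≤ √(‖x‖ ^ 2) := Real.sqrt_le_sqrt h3
    _ = ‖x‖ := Real.sqrt_sq (norm_nonneg _)

lemma pad_eq (x : EuclideanSpace ℝ (Fin n)) :
    padInclusion n (n + n) x = cEquiv n (WithLp.toLp 2 (fun j => ((x j : ℝ) : ℂ)) : CSp n) := by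
  ext j
  rw [padInclusion]
  by_cases h : (j : ℕ) < n
  · rw [cEquiv_apply_lt _ j h]
    simp only [WithLp.equiv_symm_apply, WithLp.equiv_apply, PiLp.toLp_apply, dif_pos h, Complex.ofReal_re]
  · rw [cEquiv_apply_ge _ j h]
    simp only [WithLp.equiv_symm_apply, WithLp.equiv_apply, PiLp.toLp_apply, dif_neg h, Complex.ofReal_im]

end SubPToralProof

open SubPToralProof in
theorem subPToral_approximation_aux (δ : ℝ) (hδ : 0 < δ) {n m : ℕ}
    (a : Fin m → EuclideanSpace ℝ (Fin n)) :
    ∃ p₀ : ℕ, ∀ p : ℕ, p.Prime → p₀ ≤ p →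
      ∃ N : ℕ, n ≤ N ∧ ∃ s : Fin m → EuclideanSpace ℝ (Fin N),
        EuclideanSubPToral p (Set.range s) ∧
        ∀ i : Fin m, ‖padInclusion n N (a i) - s i‖ < δ := by
  classical
  set M : ℝ := 1 + ∑ i, ‖a i‖ with hMdef
  have hsum0 : (0:ℝ) ≤ ∑ i, ‖a i‖ := Finset.sum_nonneg fun i _ => norm_nonneg _
  have hM1 : 1 ≤ M := by rw [hMdef]; linarith
  have hMa : ∀ i j, |a i j| ≤ M := by
    intro i j
    calc |a i j| ≤ ‖a i‖ := coord_le_norm _ _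
      _ ≤ ∑ i', ‖a i'‖ :=
          Finset.single_le_sum (f := fun i' => ‖a i'‖) (fun _ _ => norm_nonneg _)
            (Finset.mem_univ i)
      _ ≤ M := by rw [hMdef]; linarith
  set R : ℝ := M + 2 * ((n : ℝ) + 1) * M ^ 2 / δ with hRdef
  have hextra : (0:ℝ) ≤ 2 * ((n : ℝ) + 1) * M ^ 2 / δ := by positivity
  have hMR : M ≤ R := by rw [hRdef]; linarith
  have hR : 0 < R := lt_of_lt_of_le (by linarith) hMR
  have hM2R : M ^ 2 / R ≤ δ / (2 * ((n : ℝ) + 1)) := by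
    rw [div_le_div_iff₀ hR (by positivity)]
    have heq : δ * R = δ * M + 2 * ((n : ℝ) + 1) * M ^ 2 := by
      rw [hRdef]
      field_simp
    rw [heq]
    nlinarith [mul_nonneg hδ.le (by linarith : (0:ℝ) ≤ M)]
  refine ⟨⌈2 * π * ((n : ℝ) + 1) * R / δ⌉₊ + 1, ?_⟩
  intro p hp hple
  haveI : NeZero p := ⟨hp.pos.ne'⟩
  have hppos : (0:ℝ) < p := by exact_mod_cast hp.pos
  have hπRp : π * R / p ≤ δ / (2 * ((n : ℝ) + 1)) := by
    have h1 : (2 * π * ((n : ℝ) + 1) * R / δ : ℝ) ≤ (⌈2 * π * ((n : ℝ) + 1) * R / δ⌉₊ : ℝ) :=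
      Nat.le_ceil _
    have h2 : ((⌈2 * π * ((n : ℝ) + 1) * R / δ⌉₊ + 1 : ℕ) : ℝ) ≤ p := by exact_mod_cast hple
    push_cast at h2
    have h3 : 2 * π * ((n : ℝ) + 1) * R / δ ≤ (p : ℝ) := by linarith
    have h4 : 2 * π * ((n : ℝ) + 1) * R ≤ (p : ℝ) * δ := by
      have := (div_le_iff₀ hδ).mp h3
      linarith
    rw [div_le_div_iff₀ hppos (by positivity)]
    nlinarith [Real.pi_pos, hR]
  set kk : Fin m → Fin n → ZMod p :=
    fun i j => ((round ((p : ℝ) * arcsin (a i j / R) / (2 * π)) : ℤ) : ZMod p) with hkk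
  refine ⟨n + n, by omega, fun i => bigIso R (circOf p (kk i)) 0, ?_, ?_⟩
  · refine ⟨n + n, le_refl _, fun x => (x : EuclideanSpace ℝ (Fin (n + n))), fun x y => rfl,
      (bigHom n p R).range, n,
      ⟨(MonoidHom.ofInjective (bigHom_injective n p R)).symm⟩, 0, ?_⟩
    rintro ⟨x, i, rfl⟩
    exact ⟨bigHom n p R (Multiplicative.ofAdd (kk i)), ⟨_, rfl⟩, rfl⟩
  · intro i
    have hpad : padInclusion n (n + n) (a i)
        = cEquiv n (WithLp.toLp 2 (fun j => ((a i j : ℝ) : ℂ)) : CSp n) := pad_eq _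
    have hsi : bigIso R (circOf p (kk i)) 0 = cEquiv n (moveIso R (circOf p (kk i)) 0) := by
      rw [bigIso_apply]
      exact congrArg _ (congrArg _ (map_zero _))
    show ‖padInclusion n (n + n) (a i) - bigIso R (circOf p (kk i)) 0‖ < δ
    rw [hpad, hsi, ← map_sub, LinearIsometryEquiv.norm_map]
    set w : CSp n := WithLp.toLp 2 (fun j => ((a i j : ℝ) : ℂ)) with hw
    set mv : CSp n := moveIso R (circOf p (kk i)) 0 with hmv
    have hcoord : ∀ j : Fin n, ‖(w - mv) j‖ ≤ δ / ((n : ℝ) + 1) := by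
      intro j
      have h1 : mv j = (R : ℂ) * Complex.I
          + (circOf p (kk i) j : ℂ) * ((0 : ℂ) - (R : ℂ) * Complex.I) := by
        rw [hmv, moveIso_apply]
        norm_num
      have h2 : circOf p (kk i) j
          = Circle.exp (2 * π * ((round ((p : ℝ) * arcsin (a i j / R) / (2 * π)) : ℤ) : ℝ)
              / p) := by
        rw [hkk]
        exact exp_val_intCast _
      have h3 : (w - mv) j = (a i j : ℂ) - mv j := by
        rw [PiLp.sub_apply]
      rw [h3, h1, h2]
      have hb := coord_bound R (p : ℝ) (a i j) hR hppos ((hMa i j).trans hMR)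
      have hsq : (a i j) ^ 2 ≤ M ^ 2 := by
        nlinarith [sq_abs (a i j), hMa i j, abs_nonneg (a i j), hM1]
      calc ‖(a i j : ℂ) - ((R : ℂ) * Complex.I
            + (Circle.exp (2 * π * ((round ((p : ℝ) * arcsin (a i j / R) / (2 * π)) : ℤ) : ℝ)
                / p) : ℂ) * ((0 : ℂ) - (R : ℂ) * Complex.I))‖
          ≤ (a i j) ^ 2 / R + π * R / p := hb
        _ ≤ M ^ 2 / R + π * R / p := by gcongr
        _ ≤ δ / (2 * ((n : ℝ) + 1)) + δ / (2 * ((n : ℝ) + 1)) := add_le_add hM2R hπRp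
        _ = δ / ((n : ℝ) + 1) := by
            have hne : ((n : ℝ) + 1) ≠ 0 := by positivity
            field_simp
            ring
    have hn1 : (0:ℝ) < (n : ℝ) + 1 := by positivity
    have hsum : ‖w - mv‖ ^ 2 ≤ (n : ℝ) * (δ / ((n : ℝ) + 1)) ^ 2 := by
      rw [PiLp.norm_sq_eq_of_L2]
      calc (∑ j, ‖(w - mv) j‖ ^ 2)
          ≤ ∑ _j : Fin n, (δ / ((n : ℝ) + 1)) ^ 2 :=
            Finset.sum_le_sum fun j _ =>
              pow_le_pow_left₀ (norm_nonneg _) (hcoord j) 2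
        _ = (n : ℝ) * (δ / ((n : ℝ) + 1)) ^ 2 := by
            simp [Finset.sum_const, Finset.card_univ, nsmul_eq_mul]
    have hfin : ‖w - mv‖ ^ 2 < δ ^ 2 := by
      have hlt : (n : ℝ) * (δ / ((n : ℝ) + 1)) ^ 2 < δ ^ 2 := by
        rw [div_pow, mul_div_assoc']
        rw [div_lt_iff₀ (by positivity : (0:ℝ) < ((n : ℝ) + 1) ^ 2)]
        have hδ2 : (0:ℝ) < δ ^ 2 := by positivity
        nlinarith [hδ2, mul_nonneg hδ2.le (sq_nonneg (n : ℝ)),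
          mul_nonneg hδ2.le (Nat.cast_nonneg n : (0:ℝ) ≤ (n : ℝ))]
      linarith
    exact lt_of_pow_lt_pow_left₀ 2 hδ.le hfin

/-- **Theorem 11 (sub-p-toral sets are dense among all finite sets).** For every `δ > 0`
and points `a₁, …, a_m ∈ ℝⁿ` there is `p₀` such that for every prime `p ≥ p₀` there are
`N ≥ n` and a Euclidean sub-p-toral set `{s₁, …, s_m} ⊆ ℝ^N` with `‖ι(aᵢ) - sᵢ‖ < δ` for
all `i`, where `ι : ℝⁿ → ℝ^N` is the standard inclusion. -/
theorem subPToral_approximation (δ : ℝ) (hδ : 0 < δ) {n m : ℕ}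
    (a : Fin m → EuclideanSpace ℝ (Fin n)) :
    ∃ p₀ : ℕ, ∀ p : ℕ, p.Prime → p₀ ≤ p →
      ∃ N : ℕ, n ≤ N ∧ ∃ s : Fin m → EuclideanSpace ℝ (Fin N),
        EuclideanSubPToral p (Set.range s) ∧
        ∀ i : Fin m, ‖padInclusion n N (a i) - s i‖ < δ :=
  subPToral_approximation_aux δ hδ a
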